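/- Let Λ = {λ_n} be an increasing sequence of positive numbers with λ_n → ∞. If limsup_{n→∞} (Σ_{k=1}^{n²} 1/λ_k) / (Σ_{k=1}^{n} 1/λ_k) = +∞, then Λ#BV \ Λ*BV ≠ ∅, i.e. there exists a 2π-periodic (in each variable) function f : ℝ² → ℝ with f ∈ Λ#BV but f ∉ Λ*BV. -/

import Mathlib

open scoped ENNReal BigOperators
open Filter Set

noncomputable section

/-- A collection of `n` pairwise nonoverlapping subintervals of `T = [0, 2π]`,
given as pairs of endpoints. -/
def NonoverlapIcc (n : ℕ) (I : Fin n → ℝ × ℝ) : Prop :=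
  (∀ i, 0 ≤ (I i).1 ∧ (I i).1 < (I i).2 ∧ (I i).2 ≤ 2 * Real.pi) ∧
    ∀ i j, i ≠ j → (I i).2 ≤ (I j).1 ∨ (I j).2 ≤ (I i).1

/-- `f : ℝ² → ℝ` (curried) is `2π`-periodic in each variable. -/
def Periodic2 (f : ℝ → ℝ → ℝ) : Prop :=
  ∀ x y : ℝ, f (x + 2 * Real.pi) y = f x y ∧ f x (y + 2 * Real.pi) = f x y

/-- `ΛV₁(f)`: partial `Λ`-variation in the first variable. -/
def LamV1 (Λ : ℕ → ℝ) (f : ℝ → ℝ → ℝ) : ℝ≥0∞ :=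
  ⨆ (y ∈ Icc (0:ℝ) (2 * Real.pi)) (n : ℕ) (I : Fin n → ℝ × ℝ) (_ : NonoverlapIcc n I),
    ENNReal.ofReal (∑ i, |f (I i).2 y - f (I i).1 y| / Λ ((i : ℕ) + 1))

/-- `ΛV₂(f)`: partial `Λ`-variation in the second variable. -/
def LamV2 (Λ : ℕ → ℝ) (f : ℝ → ℝ → ℝ) : ℝ≥0∞ :=
  ⨆ (x ∈ Icc (0:ℝ) (2 * Real.pi)) (m : ℕ) (J : Fin m → ℝ × ℝ) (_ : NonoverlapIcc m J),
    ENNReal.ofReal (∑ j, |f x (J j).2 - f x (J j).1| / Λ ((j : ℕ) + 1))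

/-- `ΛV₁,₂(f)`: mixed `Λ`-variation. -/
def LamV12 (Λ : ℕ → ℝ) (f : ℝ → ℝ → ℝ) : ℝ≥0∞ :=
  ⨆ (n : ℕ) (m : ℕ) (I : Fin n → ℝ × ℝ) (J : Fin m → ℝ × ℝ)
    (_ : NonoverlapIcc n I) (_ : NonoverlapIcc m J),
    ENNReal.ofReal (∑ i, ∑ j,
      |f (I i).1 (J j).1 - f (I i).1 (J j).2 - f (I i).2 (J j).1 + f (I i).2 (J j).2| /
        (Λ ((i : ℕ) + 1) * Λ ((j : ℕ) + 1)))

/-- Total harmonic variation `HV(f) = HV₁(f) + HV₂(f) + HV₁,₂(f)` (with `λ_n = n`).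
`f ∈ HBV` iff `HarmonicV f ≠ ⊤`. -/
def HarmonicV (f : ℝ → ℝ → ℝ) : ℝ≥0∞ :=
  LamV1 (fun n => (n : ℝ)) f + LamV2 (fun n => (n : ℝ)) f + LamV12 (fun n => (n : ℝ)) f

/-- `Λ#V₁(f)`. -/
def LamSharpV1 (Λ : ℕ → ℝ) (f : ℝ → ℝ → ℝ) : ℝ≥0∞ :=
  ⨆ (n : ℕ) (I : Fin n → ℝ × ℝ) (y : Fin n → ℝ)
    (_ : NonoverlapIcc n I) (_ : ∀ i, y i ∈ Icc (0:ℝ) (2 * Real.pi)),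
    ENNReal.ofReal (∑ i, |f (I i).2 (y i) - f (I i).1 (y i)| / Λ ((i : ℕ) + 1))

/-- `Λ#V₂(f)`. -/
def LamSharpV2 (Λ : ℕ → ℝ) (f : ℝ → ℝ → ℝ) : ℝ≥0∞ :=
  ⨆ (m : ℕ) (J : Fin m → ℝ × ℝ) (x : Fin m → ℝ)
    (_ : NonoverlapIcc m J) (_ : ∀ j, x j ∈ Icc (0:ℝ) (2 * Real.pi)),
    ENNReal.ofReal (∑ j, |f (x j) (J j).2 - f (x j) (J j).1| / Λ ((j : ℕ) + 1))

/-- A collection of `n` pairwise nonoverlapping rectangles `[α,β] × [γ,δ] ⊆ T²`,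
encoded as `((α, β), (γ, δ))`. -/
def NonoverlapRect (n : ℕ) (A : Fin n → (ℝ × ℝ) × (ℝ × ℝ)) : Prop :=
  (∀ k, 0 ≤ (A k).1.1 ∧ (A k).1.1 < (A k).1.2 ∧ (A k).1.2 ≤ 2 * Real.pi ∧
        0 ≤ (A k).2.1 ∧ (A k).2.1 < (A k).2.2 ∧ (A k).2.2 ≤ 2 * Real.pi) ∧
    ∀ k l, k ≠ l →
      Disjoint (Ioo (A k).1.1 (A k).1.2 ×ˢ Ioo (A k).2.1 (A k).2.2)
        (Ioo (A l).1.1 (A l).1.2 ×ˢ Ioo (A l).2.1 (A l).2.2)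

/-- `Λ*V(f)` of Dyachenko–Waterman. -/
def LamStarV (Λ : ℕ → ℝ) (f : ℝ → ℝ → ℝ) : ℝ≥0∞ :=
  ⨆ (n : ℕ) (A : Fin n → (ℝ × ℝ) × (ℝ × ℝ)) (_ : NonoverlapRect n A),
    ENNReal.ofReal (∑ k,
      |f (A k).1.1 (A k).2.1 - f (A k).1.1 (A k).2.2 -
        f (A k).1.2 (A k).2.1 + f (A k).1.2 (A k).2.2| / Λ ((k : ℕ) + 1))

/-- Partial `p`-variation (first variable); with `Φ(u) = u^p`. -/
def PV1pow (p : ℝ) (f : ℝ → ℝ → ℝ) : ℝ≥0∞ :=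
  ⨆ (y ∈ Icc (0:ℝ) (2 * Real.pi)) (n : ℕ) (I : Fin n → ℝ × ℝ) (_ : NonoverlapIcc n I),
    ENNReal.ofReal (∑ i, |f (I i).2 y - f (I i).1 y| ^ p)

/-- Partial `p`-variation (second variable). -/
def PV2pow (p : ℝ) (f : ℝ → ℝ → ℝ) : ℝ≥0∞ :=
  ⨆ (x ∈ Icc (0:ℝ) (2 * Real.pi)) (m : ℕ) (J : Fin m → ℝ × ℝ) (_ : NonoverlapIcc m J),
    ENNReal.ofReal (∑ j, |f x (J j).2 - f x (J j).1| ^ p)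

/-- `V#_{Φ,1}(f)` for the class `B#V_Φ`. -/
def PhiSharpV1 (Φ : ℝ → ℝ) (f : ℝ → ℝ → ℝ) : ℝ≥0∞ :=
  ⨆ (n : ℕ) (I : Fin n → ℝ × ℝ) (y : Fin n → ℝ)
    (_ : NonoverlapIcc n I) (_ : ∀ i, y i ∈ Icc (0:ℝ) (2 * Real.pi)),
    ENNReal.ofReal (∑ i, Φ |f (I i).2 (y i) - f (I i).1 (y i)|)

/-- `V#_{Φ,2}(f)` for the class `B#V_Φ`. -/
def PhiSharpV2 (Φ : ℝ → ℝ) (f : ℝ → ℝ → ℝ) : ℝ≥0∞ :=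
  ⨆ (m : ℕ) (J : Fin m → ℝ × ℝ) (x : Fin m → ℝ)
    (_ : NonoverlapIcc m J) (_ : ∀ j, x j ∈ Icc (0:ℝ) (2 * Real.pi)),
    ENNReal.ofReal (∑ j, Φ |f (x j) (J j).2 - f (x j) (J j).1|)

/-- Partial modulus of variation `v₁(n, f)`. -/
def modV1 (f : ℝ → ℝ → ℝ) (n : ℕ) : ℝ≥0∞ :=
  ⨆ (y ∈ Icc (0:ℝ) (2 * Real.pi)) (I : Fin n → ℝ × ℝ) (_ : NonoverlapIcc n I),
    ENNReal.ofReal (∑ i, |f (I i).2 y - f (I i).1 y|)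

/-- Partial modulus of variation `v₂(m, f)`. -/
def modV2 (f : ℝ → ℝ → ℝ) (m : ℕ) : ℝ≥0∞ :=
  ⨆ (x ∈ Icc (0:ℝ) (2 * Real.pi)) (J : Fin m → ℝ × ℝ) (_ : NonoverlapIcc m J),
    ENNReal.ofReal (∑ j, |f x (J j).2 - f x (J j).1|)

/-- `v₁#(n, f)`. -/
def modSharpV1 (f : ℝ → ℝ → ℝ) (n : ℕ) : ℝ≥0∞ :=
  ⨆ (I : Fin n → ℝ × ℝ) (y : Fin n → ℝ)
    (_ : NonoverlapIcc n I) (_ : ∀ i, y i ∈ Icc (0:ℝ) (2 * Real.pi)),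
    ENNReal.ofReal (∑ i, |f (I i).2 (y i) - f (I i).1 (y i)|)

/-- `v₂#(m, f)`. -/
def modSharpV2 (f : ℝ → ℝ → ℝ) (m : ℕ) : ℝ≥0∞ :=
  ⨆ (J : Fin m → ℝ × ℝ) (x : Fin m → ℝ)
    (_ : NonoverlapIcc m J) (_ : ∀ j, x j ∈ Icc (0:ℝ) (2 * Real.pi)),
    ENNReal.ofReal (∑ j, |f (x j) (J j).2 - f (x j) (J j).1|)

/-- The shifted sequence `Λ_n = {λ_k}_{k=n}^∞`: its `i`-th member (`i ≥ 1`) is `λ_{n+i-1}`. -/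
def ShiftSeq (Λ : ℕ → ℝ) (n : ℕ) : ℕ → ℝ := fun k => Λ (k + n - 1)

/-- The sequence `λ_n = n / log n` (for `n ≥ 2`; the value at `n ≤ 1` is irrelevant). -/
def nlogSeq : ℕ → ℝ := fun n => if n ≤ 1 then 1 else (n : ℝ) / Real.log n

/-- Double Fourier coefficient
`f̂(m,n) = (1/(4π²)) ∫₀^{2π}∫₀^{2π} f(x,y) e^{-imx} e^{-iny} dx dy`. -/
def fCoef (f : ℝ → ℝ → ℝ) (m n : ℤ) : ℂ :=
  (4 * (Real.pi : ℂ) ^ 2)⁻¹ *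
    ∫ x in (0:ℝ)..(2 * Real.pi), ∫ y in (0:ℝ)..(2 * Real.pi),
      (f x y : ℂ) * Complex.exp (-(Complex.I * (m : ℂ) * (x : ℂ))) *
        Complex.exp (-(Complex.I * (n : ℂ) * (y : ℂ)))

/-- Rectangular partial sum `S_{M,N}[f,(x,y)]` of the double Fourier series. -/
def SRect (f : ℝ → ℝ → ℝ) (M N : ℕ) (x y : ℝ) : ℂ :=
  ∑ m ∈ Finset.Icc (-(M : ℤ)) (M : ℤ), ∑ n ∈ Finset.Icc (-(N : ℤ)) (N : ℤ),
    fCoef f m n * Complex.exp (Complex.I * (m : ℂ) * (x : ℂ)) *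
      Complex.exp (Complex.I * (n : ℂ) * (y : ℂ))

/-- One-sided punctured neighborhood filter: from the right if `s = true`,
from the left if `s = false`. -/
def sideF (x : ℝ) (s : Bool) : Filter ℝ :=
  if s then nhdsWithin x (Ioi x) else nhdsWithin x (Iio x)

/-- `HasQuadLim f x y s t L` means the open-quadrant limit of `f` at `(x,y)` from the
quadrant with horizontal direction `s` and vertical direction `t` exists and equals `L`
(e.g. `s = true, t = false` is `f(x+0, y-0)`). -/
def HasQuadLim (f : ℝ → ℝ → ℝ) (x y : ℝ) (s t : Bool) (L : ℝ) : Prop :=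
  Tendsto (fun p : ℝ × ℝ => f p.1 p.2) ((sideF x s) ×ˢ (sideF y t)) (nhds L)

/-- Cesàro numbers `A_k^α = (α+1)(α+2)⋯(α+k)/k!`. -/
def AA (α : ℝ) : ℕ → ℝ
  | 0 => 1
  | k + 1 => AA α k * (α + ((k : ℝ) + 1)) / ((k : ℝ) + 1)

/-- Cesàro `(C; α, β)` means of the double Fourier series of `f`. -/
def cesaro (f : ℝ → ℝ → ℝ) (α β : ℝ) (n m : ℕ) (x y : ℝ) : ℂ :=
  ((1 / (AA α n * AA β m) : ℝ) : ℂ) *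
    ∑ i ∈ Finset.range (n + 1), ∑ j ∈ Finset.range (m + 1),
      ((AA (α - 1) (n - i) * AA (β - 1) (m - j) : ℝ) : ℂ) * SRect f i j x y

end


noncomputable section St4sec
namespace St4
set_option maxHeartbeats 1000000



/-- antitone nonneg sums: a finset sum is at most the initial-segment sum. -/
lemma sum_le_head (w : ℕ → ℝ) (hw : ∀ k l, k ≤ l → w l ≤ w k) (hw0 : ∀ k, 0 ≤ w k) :
    ∀ (T : Finset ℕ), ∑ i ∈ T, w i ≤ ∑ k ∈ Finset.range T.card, w k := by
  intro T
  induction T using Finset.strongInduction with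
  | _ T ih =>
    rcases T.eq_empty_or_nonempty with rfl | hne
    · simp
    · have hM : T.max' hne ∈ T := T.max'_mem hne
      have hcard : (T.erase (T.max' hne)).card = T.card - 1 := Finset.card_erase_of_mem hM
      have hpos : 0 < T.card := Finset.card_pos.2 hne
      have hsub : T ⊆ Finset.range (T.max' hne + 1) := by
        intro x hx
        exact Finset.mem_range.2 (Nat.lt_succ_of_le (T.le_max' x hx))
      have hcards : T.card ≤ T.max' hne + 1 := by
        simpa using Finset.card_le_card hsub
      have hMax : T.card - 1 ≤ T.max' hne := by omega
      have h1 : ∑ i ∈ T.erase (T.max' hne), w i ≤ ∑ k ∈ Finset.range (T.card - 1), w k := by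
        have := ih (T.erase (T.max' hne)) (Finset.erase_ssubset hM)
        rwa [hcard] at this
      have h2 : ∑ i ∈ T, w i = ∑ i ∈ T.erase (T.max' hne), w i + w (T.max' hne) := by
        rw [Finset.sum_erase_add _ _ hM]
      have h3 : w (T.max' hne) ≤ w (T.card - 1) := hw _ _ hMax
      have h4 : ∑ k ∈ Finset.range T.card, w k
          = ∑ k ∈ Finset.range (T.card - 1), w k + w (T.card - 1) := by
        have : T.card = (T.card - 1) + 1 := by omega
        rw [this, Finset.sum_range_succ]
        congr 1 <;> omega
      rw [h2, h4]
      linarith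

lemma sum_le_head' (w : ℕ → ℝ) (hw : ∀ k l, k ≤ l → w l ≤ w k) (hw0 : ∀ k, 0 ≤ w k)
    {n : ℕ} (T : Finset (Fin n)) (m : ℕ) (hm : T.card ≤ m) :
    ∑ i ∈ T, w (i : ℕ) ≤ ∑ k ∈ Finset.range m, w k := by
  have h1 : ∑ i ∈ T, w (i : ℕ) = ∑ i ∈ T.image (fun i : Fin n => (i : ℕ)), w i := by
    rw [Finset.sum_image]
    intro a _ b _ h
    exact Fin.val_injective h
  have hcard : (T.image (fun i : Fin n => (i : ℕ))).card = T.card :=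
    Finset.card_image_of_injective _ Fin.val_injective
  rw [h1]
  calc ∑ i ∈ T.image (fun i : Fin n => (i : ℕ)), w i
      ≤ ∑ k ∈ Finset.range (T.image (fun i : Fin n => (i : ℕ))).card, w k :=
        sum_le_head w hw hw0 _
    _ ≤ ∑ k ∈ Finset.range m, w k := by
        apply Finset.sum_le_sum_of_subset_of_nonneg
        · exact Finset.range_subset_range.2 (by omega)
        · intro k _ _; exact hw0 k

/-- block sum bound for antitone sequences. -/
lemma sum_range_mul_le (w : ℕ → ℝ) (hw : ∀ k l, k ≤ l → w l ≤ w k) (hw0 : ∀ k, 0 ≤ w k)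
    (c n : ℕ) : ∑ k ∈ Finset.range (c * n), w k ≤ c * ∑ k ∈ Finset.range n, w k := by
  induction c with
  | zero => simp
  | succ c ih =>
    have : (c + 1) * n = c * n + n := by ring
    rw [this, Finset.sum_range_add]
    have h2 : ∑ x ∈ Finset.range n, w (c * n + x) ≤ ∑ x ∈ Finset.range n, w x :=
      Finset.sum_le_sum (fun i _ => hw i _ (Nat.le_add_left i _))
    push_cast
    linarith


variable (Λ : ℕ → ℝ) (nn : ℕ → ℕ)


def w (k : ℕ) : ℝ := 1 / Λ (k + 1)
def sig (j : ℕ) : ℝ := ∑ k ∈ Finset.range (nn j), w Λ k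
def tau (j : ℕ) : ℝ := ∑ k ∈ Finset.range ((nn j) ^ 2), w Λ k
def pj (j : ℕ) : ℝ := Real.pi / 2 ^ j
def hh (j : ℕ) : ℝ := pj j / (2 * (nn j : ℝ) + 2)
def uu (j p : ℕ) : ℝ := pj j + (2 * (p : ℝ) + 1) * hh nn j
def vv (j p : ℕ) : ℝ := pj j + (2 * (p : ℝ) + 2) * hh nn j
def mm (j p : ℕ) : ℝ := pj j + (2 * (p : ℝ) + 3/2) * hh nn j
def MM (j p : ℕ) : ℝ := pj j + (2 * (p : ℝ) + 5/2) * hh nn j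
def SS (j : ℕ) : Set ℝ := ⋃ p ∈ Finset.range (nn j), Icc (uu nn j p) (vv nn j p)
def ind (j : ℕ) (x : ℝ) : ℝ := (SS nn j).indicator 1 x
def aa (j : ℕ) : ℝ := 1 / (2 ^ (j + 1) * sig Λ nn j)
def rr (x : ℝ) : ℝ := x - 2 * Real.pi * ⌊x / (2 * Real.pi)⌋
def f0 (x y : ℝ) : ℝ := ∑' j, aa Λ nn j * ind nn j x * ind nn j y
def ff (x y : ℝ) : ℝ := f0 Λ nn (rr x) (rr y)

lemma pj_pos (j : ℕ) : 0 < pj j := div_pos Real.pi_pos (by positivity)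
lemma hh_pos (j : ℕ) : 0 < hh nn j := div_pos (pj_pos j) (by positivity)

open Classical in
lemma ind_eq (j : ℕ) (x : ℝ) : ind nn j x = if x ∈ SS nn j then 1 else 0 := by
  simp [ind, Set.indicator_apply]
lemma ind_nonneg (j : ℕ) (x : ℝ) : 0 ≤ ind nn j x := by rw [ind_eq]; split <;> norm_num
lemma ind_le_one (j : ℕ) (x : ℝ) : ind nn j x ≤ 1 := by rw [ind_eq]; split <;> norm_num
lemma ind_of_mem {j : ℕ} {x : ℝ} (h : x ∈ SS nn j) : ind nn j x = 1 := by rw [ind_eq]; simp [h]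
lemma ind_of_not_mem {j : ℕ} {x : ℝ} (h : x ∉ SS nn j) : ind nn j x = 0 := by
  rw [ind_eq]; simp [h]

lemma SS_subset (j : ℕ) : SS nn j ⊆ Ioo (pj j) (2 * pj j) := by
  intro x hx
  simp only [SS, Set.mem_iUnion] at hx
  obtain ⟨p, hp, hx1, hx2⟩ := hx
  have hp' : (p : ℝ) ≤ (nn j : ℝ) - 1 := by
    have h1 := Finset.mem_range.1 hp
    have : (p : ℝ) + 1 ≤ (nn j : ℝ) := by exact_mod_cast h1
    linarith
  have hcalc : (2 * (nn j : ℝ) + 2) * hh nn j = pj j := by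
    rw [hh]; field_simp
  constructor
  · have : pj j < uu nn j p := by
      rw [uu]; nlinarith [hh_pos nn j, Nat.cast_nonneg (α := ℝ) p]
    linarith [hx1]
  · have : vv nn j p < 2 * pj j := by rw [vv]; nlinarith [hh_pos nn j]
    linarith [hx2]

lemma pj_block_le {j l : ℕ} (h : j < l) : 2 * pj l ≤ pj j := by
  have h2 : (2:ℝ) ^ j * 2 ≤ 2 ^ l := by
    calc (2:ℝ) ^ j * 2 = 2 ^ (j + 1) := by ring
    _ ≤ 2 ^ l := by apply pow_le_pow_right₀ (by norm_num) (by omega)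
  have hp := Real.pi_pos
  have hl : (0:ℝ) < 2 ^ l := by positivity
  have hj : (0:ℝ) < 2 ^ j := by positivity
  rw [pj, pj, mul_div_assoc', div_le_div_iff₀ hl hj]
  nlinarith

lemma SS_disj {j l : ℕ} (h : j ≠ l) {x : ℝ} (hx : x ∈ SS nn j) : x ∉ SS nn l := by
  intro hx'
  have h1 := SS_subset nn j hx
  have h2 := SS_subset nn l hx'
  rcases Nat.lt_or_ge j l with hlt | hge
  · have := pj_block_le hlt
    simp only [mem_Ioo] at h1 h2
    linarith [h2.2, h1.1]
  · have hlt : l < j := by omega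
    have := pj_block_le hlt
    simp only [mem_Ioo] at h1 h2
    linarith [h1.2, h2.1]

lemma SS_subset' (j : ℕ) : SS nn j ⊆ Ioo 0 (2 * Real.pi) := by
  intro x hx
  have h1 := SS_subset nn j hx
  simp only [mem_Ioo] at h1 ⊢
  have hpj := pj_pos j
  have : pj j ≤ Real.pi := by
    rw [pj]
    have : (1:ℝ) ≤ 2 ^ j := one_le_pow₀ (by norm_num)
    rw [div_le_iff₀ (by positivity)]
    nlinarith [Real.pi_pos]
  constructor <;> nlinarith [Real.pi_pos]

lemma f0_eq_right {j : ℕ} {y : ℝ} (hy : y ∈ SS nn j) (x : ℝ) :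
    f0 Λ nn x y = aa Λ nn j * ind nn j x := by
  rw [f0]
  rw [tsum_eq_single j]
  · rw [ind_of_mem nn hy, mul_one]
  · intro l hl
    have : y ∉ SS nn l := by
      intro hc
      exact SS_disj nn hl hc hy
    rw [ind_of_not_mem nn this, mul_zero]

lemma f0_zero_right {y : ℝ} (hy : ∀ j, y ∉ SS nn j) (x : ℝ) : f0 Λ nn x y = 0 := by
  rw [f0]
  convert tsum_zero with j
  rw [ind_of_not_mem nn (hy j), mul_zero]

lemma f0_symm (x y : ℝ) : f0 Λ nn x y = f0 Λ nn y x := by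
  rw [f0, f0]
  exact tsum_congr fun j => by ring

lemma f0_eq_left {j : ℕ} {x : ℝ} (hx : x ∈ SS nn j) (y : ℝ) :
    f0 Λ nn x y = aa Λ nn j * ind nn j y := by
  rw [f0_symm, f0_eq_right Λ nn hx]

lemma f0_zero_left {x : ℝ} (hx : ∀ j, x ∉ SS nn j) (y : ℝ) : f0 Λ nn x y = 0 := by
  rw [f0_symm, f0_zero_right Λ nn hx]

lemma rr_eq_self {x : ℝ} (h1 : 0 ≤ x) (h2 : x < 2 * Real.pi) : rr x = x := by
  have hfl : ⌊x / (2 * Real.pi)⌋ = 0 := by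
    apply Int.floor_eq_zero_iff.2
    constructor
    · exact div_nonneg h1 (by positivity)
    · rw [div_lt_one (by positivity)]; exact h2
  rw [rr, hfl]
  simp

lemma rr_period (x : ℝ) : rr (x + 2 * Real.pi) = rr x := by
  have h2pi : (0:ℝ) < 2 * Real.pi := by positivity
  rw [rr, rr]
  have : (x + 2 * Real.pi) / (2 * Real.pi) = x / (2 * Real.pi) + 1 := by
    field_simp
  rw [this, Int.floor_add_one]
  push_cast
  ring

lemma ff_periodic (x y : ℝ) :
    ff Λ nn (x + 2 * Real.pi) y = ff Λ nn x y ∧ ff Λ nn x (y + 2 * Real.pi) = ff Λ nn x y := by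
  rw [ff, ff, ff, rr_period, rr_period]
  exact ⟨rfl, rfl⟩

lemma ind_rr {x : ℝ} (h : x ∈ Icc 0 (2 * Real.pi)) (j : ℕ) : ind nn j (rr x) = ind nn j x := by
  rcases lt_or_eq_of_le h.2 with hlt | heq
  · rw [rr_eq_self h.1 hlt]
  · have h0 : rr x = 0 := by
      rw [heq]
      have : rr (0 + 2 * Real.pi) = rr 0 := rr_period 0
      simpa [rr_eq_self (le_refl (0:ℝ)) (by positivity)] using this
    rw [h0, heq]
    rw [ind_of_not_mem nn (fun hc => by have := (SS_subset' nn j hc).1; linarith),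
        ind_of_not_mem nn (fun hc => by have := (SS_subset' nn j hc).2; linarith)]

lemma ff_eq_f0 {x y : ℝ} (hx : x ∈ Icc 0 (2 * Real.pi)) (hy : y ∈ Icc 0 (2 * Real.pi)) :
    ff Λ nn x y = f0 Λ nn x y := by
  rw [ff, f0, f0]
  exact tsum_congr fun j => by rw [ind_rr nn hx, ind_rr nn hy]



lemma three_intervals {n : ℕ} {I : Fin n → ℝ × ℝ} (hI : NonoverlapIcc n I) {x : ℝ}
    {i j k : Fin n} (hij : i ≠ j) (hik : i ≠ k) (hjk : j ≠ k)
    (hxi : (I i).1 ≤ x ∧ x ≤ (I i).2) (hxj : (I j).1 ≤ x ∧ x ≤ (I j).2)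
    (hxk : (I k).1 ≤ x ∧ x ≤ (I k).2) : False := by
  obtain ⟨hi1, hi2, _⟩ := hI.1 i
  obtain ⟨hj1, hj2, _⟩ := hI.1 j
  obtain ⟨hk1, hk2, _⟩ := hI.1 k
  rcases hI.2 i j hij with h1 | h1 <;>
  rcases hI.2 i k hik with h2 | h2 <;>
  rcases hI.2 j k hjk with h3 | h3 <;>
  linarith [hxi.1, hxi.2, hxj.1, hxj.2, hxk.1, hxk.2]



open Classical in
lemma count_le {n : ℕ} {I : Fin n → ℝ × ℝ} (hI : NonoverlapIcc n I)
    (N : ℕ) (u v : ℕ → ℝ) (S : Set ℝ)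
    (hS : ∀ x, x ∈ S ↔ ∃ p, p < N ∧ u p ≤ x ∧ x ≤ v p) :
    (Finset.univ.filter fun i : Fin n =>
      ¬(((I i).2 ∈ S) ↔ ((I i).1 ∈ S))).card ≤ 4 * N := by
  set T := Finset.univ.filter fun i : Fin n =>
      ¬(((I i).2 ∈ S) ↔ ((I i).1 ∈ S)) with hT
  set bd : Finset ℝ := ((Finset.range N).image u) ∪ ((Finset.range N).image v) with hbd
  have hbdcard : bd.card ≤ 2 * N := by
    calc bd.card ≤ ((Finset.range N).image u).card + ((Finset.range N).image v).card :=
          Finset.card_union_le _ _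
    _ ≤ N + N := by
        gcongr <;> exact le_trans (Finset.card_image_le) (by simp)
    _ = 2 * N := by ring
  -- every i in T has a boundary point in its interval
  have hbound : ∀ i ∈ T, ∃ x ∈ bd, (I i).1 ≤ x ∧ x ≤ (I i).2 := by
    intro i hi
    rw [hT, Finset.mem_filter] at hi
    have hab := (hI.1 i).2.1
    by_cases hbS : (I i).2 ∈ S
    · have haS : (I i).1 ∉ S := fun h => hi.2 (iff_of_true hbS h)
      obtain ⟨p, hp, h1, h2⟩ := (hS _).1 hbS
      refine ⟨u p, ?_, ?_, h1⟩
      · exact Finset.mem_union_left _ (Finset.mem_image_of_mem u (Finset.mem_range.2 hp))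
      · by_contra hua
        push_neg at hua
        exact haS ((hS _).2 ⟨p, hp, le_of_lt hua, by linarith⟩)
    · have haS : (I i).1 ∈ S := by
        by_contra haS
        exact hi.2 (iff_of_false hbS haS)
      obtain ⟨p, hp, h1, h2⟩ := (hS _).1 haS
      refine ⟨v p, ?_, h2, ?_⟩
      · exact Finset.mem_union_right _ (Finset.mem_image_of_mem v (Finset.mem_range.2 hp))
      · by_contra hvb
        push_neg at hvb
        exact hbS ((hS _).2 ⟨p, hp, by linarith, le_of_lt hvb⟩)
  set β : Fin n → ℝ := fun i =>
    if h : ∃ x ∈ bd, (I i).1 ≤ x ∧ x ≤ (I i).2 then h.choose else 0 with hβ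
  have hβspec : ∀ i ∈ T, β i ∈ bd ∧ (I i).1 ≤ β i ∧ β i ≤ (I i).2 := by
    intro i hi
    have h := hbound i hi
    rw [hβ]
    simp only [dif_pos h]
    exact ⟨h.choose_spec.1, h.choose_spec.2⟩
  have himg : T.image β ⊆ bd := by
    intro x hx
    obtain ⟨i, hi, rfl⟩ := Finset.mem_image.1 hx
    exact (hβspec i hi).1
  have hfiber : ∀ b ∈ T.image β, (T.filter fun i => β i = b).card ≤ 2 := by
    intro b _
    by_contra hc
    push_neg at hc
    obtain ⟨i, j, k, hi, hj, hk, hij, hik, hjk⟩ := Finset.two_lt_card_iff.1 hc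
    rw [Finset.mem_filter] at hi hj hk
    have hxi := hβspec i hi.1
    have hxj := hβspec j hj.1
    have hxk := hβspec k hk.1
    rw [hi.2] at hxi
    rw [hj.2] at hxj
    rw [hk.2] at hxk
    exact three_intervals hI hij hik hjk ⟨hxi.2.1, hxi.2.2⟩ ⟨hxj.2.1, hxj.2.2⟩ ⟨hxk.2.1, hxk.2.2⟩
  calc T.card ≤ 2 * (T.image β).card := Finset.card_le_mul_card_image T 2 hfiber
  _ ≤ 2 * bd.card := by have := Finset.card_le_card himg; omega
  _ ≤ 2 * (2 * N) := by gcongr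
  _ = 4 * N := by ring



lemma Lmono (hmono : ∀ n, 1 ≤ n → Λ n ≤ Λ (n + 1)) :
    ∀ k l, k ≤ l → Λ (k + 1) ≤ Λ (l + 1) := by
  intro k l hkl
  induction l with
  | zero =>
    have : k = 0 := by omega
    subst this; rfl
  | succ l ih =>
    rcases Nat.lt_or_ge k (l+1) with h | h
    · exact le_trans (ih (by omega)) (hmono (l+1) (by omega))
    · have : k = l + 1 := by omega
      subst this; rfl

section withH
variable (hpos : ∀ n, 1 ≤ n → 0 < Λ n) (hmono : ∀ n, 1 ≤ n → Λ n ≤ Λ (n + 1))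

include hpos in
lemma w_pos (k : ℕ) : 0 < w Λ k := by
  rw [w]; exact div_pos one_pos (hpos _ (by omega))

include hpos in
lemma w_nonneg (k : ℕ) : 0 ≤ w Λ k := le_of_lt (w_pos Λ hpos k)

include hpos hmono in
lemma w_anti : ∀ k l, k ≤ l → w Λ l ≤ w Λ k := by
  intro k l hkl
  rw [w, w]
  apply one_div_le_one_div_of_le (hpos _ (by omega)) (Lmono Λ hmono k l hkl)

include hpos in
lemma sig_pos (hn1 : ∀ j, 1 ≤ nn j) (j : ℕ) : 0 < sig Λ nn j := by
  rw [sig]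
  apply Finset.sum_pos (fun k _ => w_pos Λ hpos k)
  exact Finset.nonempty_range_iff.2 (by have := hn1 j; omega)

include hpos in
lemma aa_pos (hn1 : ∀ j, 1 ≤ nn j) (j : ℕ) : 0 < aa Λ nn j := by
  rw [aa]
  have := sig_pos Λ nn hpos hn1 j
  positivity

lemma mem_SS_iff (j : ℕ) (x : ℝ) :
    x ∈ SS nn j ↔ ∃ p, p < nn j ∧ uu nn j p ≤ x ∧ x ≤ vv nn j p := by
  simp [SS, Set.mem_iUnion, Finset.mem_range, mem_Icc]
  tauto

include hpos hmono in
open Classical in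
lemma sharp_sum_le (hn1 : ∀ j, 1 ≤ nn j) {n : ℕ} (I : Fin n → ℝ × ℝ) (y : Fin n → ℝ)
    (hI : NonoverlapIcc n I) (hy : ∀ i, y i ∈ Icc (0:ℝ) (2 * Real.pi)) :
    ∑ i, |ff Λ nn (I i).2 (y i) - ff Λ nn (I i).1 (y i)| / Λ ((i : ℕ) + 1) ≤ 4 := by
  have hIcc : ∀ i : Fin n, (I i).1 ∈ Icc (0:ℝ) (2 * Real.pi) ∧
      (I i).2 ∈ Icc (0:ℝ) (2 * Real.pi) := by
    intro i
    obtain ⟨h1, h2, h3⟩ := hI.1 i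
    exact ⟨⟨h1, by linarith⟩, ⟨by linarith, h3⟩⟩
  have hstep : ∀ i : Fin n,
      |ff Λ nn (I i).2 (y i) - ff Λ nn (I i).1 (y i)| / Λ ((i : ℕ) + 1)
      = |f0 Λ nn (I i).2 (y i) - f0 Λ nn (I i).1 (y i)| * w Λ (i : ℕ) := by
    intro i
    rw [ff_eq_f0 Λ nn (hIcc i).2 (hy i), ff_eq_f0 Λ nn (hIcc i).1 (hy i), w,
      div_eq_mul_one_div]
  rw [Finset.sum_congr rfl (fun i _ => hstep i)]
  set g : Fin n → ℝ := fun i => |f0 Λ nn (I i).2 (y i) - f0 Λ nn (I i).1 (y i)| * w Λ (i : ℕ)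
    with hg
  set D : Finset (Fin n) := Finset.univ.filter (fun i => ∃ j, y i ∈ SS nn j) with hD
  have hzero : ∀ i ∈ Finset.univ, i ∉ D → g i = 0 := by
    intro i _ hiD
    rw [hD, Finset.mem_filter] at hiD
    push_neg at hiD
    have hni : ∀ j, y i ∉ SS nn j := hiD (Finset.mem_univ i)
    rw [hg]
    simp only
    rw [f0_zero_right Λ nn hni, f0_zero_right Λ nn hni]
    simp
  rw [← Finset.sum_subset (Finset.subset_univ D) hzero]
  set L : Fin n → ℕ := fun i => if h : ∃ j, y i ∈ SS nn j then h.choose else 0 with hL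
  have hLspec : ∀ i ∈ D, y i ∈ SS nn (L i) := by
    intro i hi
    rw [hD, Finset.mem_filter] at hi
    rw [hL]
    simp only [dif_pos hi.2]
    exact hi.2.choose_spec
  have hmaps : ∀ i ∈ D, L i ∈ D.image L := fun i hi => Finset.mem_image_of_mem L hi
  rw [← Finset.sum_fiberwise_of_maps_to hmaps g]
  have hinner : ∀ j ∈ D.image L,
      ∑ i ∈ D.filter (fun i => L i = j), g i ≤ 2 * (1/2 : ℝ) ^ j := by
    intro j _
    set Fj := D.filter (fun i => L i = j) with hFj
    have hterm : ∀ i ∈ Fj,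
        g i = aa Λ nn j * (|ind nn j (I i).2 - ind nn j (I i).1| * w Λ (i : ℕ)) := by
      intro i hi
      rw [hFj, Finset.mem_filter] at hi
      have hyi : y i ∈ SS nn j := by
        have := hLspec i hi.1
        rwa [hi.2] at this
      rw [hg]
      simp only
      rw [f0_eq_right Λ nn hyi, f0_eq_right Λ nn hyi, ← mul_sub, abs_mul,
        abs_of_nonneg (le_of_lt (aa_pos Λ nn hpos hn1 j)), mul_assoc]
    rw [Finset.sum_congr rfl hterm]
    set Gj := Fj.filter (fun i => ¬(((I i).2 ∈ SS nn j) ↔ ((I i).1 ∈ SS nn j))) with hGj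
    have hzero2 : ∀ i ∈ Fj, i ∉ Gj →
        aa Λ nn j * (|ind nn j (I i).2 - ind nn j (I i).1| * w Λ (i : ℕ)) = 0 := by
      intro i hi hiG
      rw [hGj, Finset.mem_filter] at hiG
      push_neg at hiG
      have hiff := hiG hi
      by_cases hmem : (I i).1 ∈ SS nn j
      · rw [ind_of_mem nn (hiff.2 hmem), ind_of_mem nn hmem]; simp
      · rw [ind_of_not_mem nn (fun hc => hmem (hiff.1 hc)), ind_of_not_mem nn hmem]; simp
    rw [← Finset.sum_subset (Finset.filter_subset _ _) hzero2]
    have hbound2 : ∀ i ∈ Gj,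
        aa Λ nn j * (|ind nn j (I i).2 - ind nn j (I i).1| * w Λ (i : ℕ))
        ≤ aa Λ nn j * w Λ (i : ℕ) := by
      intro i _
      have h1 : |ind nn j (I i).2 - ind nn j (I i).1| ≤ 1 := by
        rw [abs_sub_le_iff]
        constructor <;>
          nlinarith [ind_nonneg nn j (I i).1, ind_nonneg nn j (I i).2,
            ind_le_one nn j (I i).1, ind_le_one nn j (I i).2]
      have h2 := w_nonneg Λ hpos (i : ℕ)
      have h3 := le_of_lt (aa_pos Λ nn hpos hn1 j)
      have h4 : |ind nn j (I i).2 - ind nn j (I i).1| * w Λ (i : ℕ) ≤ 1 * w Λ (i : ℕ) :=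
        mul_le_mul_of_nonneg_right h1 h2
      rw [one_mul] at h4
      exact mul_le_mul_of_nonneg_left h4 h3
    calc ∑ i ∈ Gj, aa Λ nn j * (|ind nn j (I i).2 - ind nn j (I i).1| * w Λ (i : ℕ))
        ≤ ∑ i ∈ Gj, aa Λ nn j * w Λ (i : ℕ) := Finset.sum_le_sum hbound2
      _ = aa Λ nn j * ∑ i ∈ Gj, w Λ (i : ℕ) := by rw [Finset.mul_sum]
      _ ≤ aa Λ nn j * ∑ k ∈ Finset.range (4 * nn j), w Λ k := by
          apply mul_le_mul_of_nonneg_left _ (le_of_lt (aa_pos Λ nn hpos hn1 j))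
          apply sum_le_head' (w Λ) (w_anti Λ hpos hmono) (w_nonneg Λ hpos)
          have hsubT : Gj ⊆ Finset.univ.filter (fun i : Fin n =>
              ¬(((I i).2 ∈ SS nn j) ↔ ((I i).1 ∈ SS nn j))) := by
            intro i hi
            rw [hGj, Finset.mem_filter] at hi
            exact Finset.mem_filter.2 ⟨Finset.mem_univ i, hi.2⟩
          calc Gj.card ≤ _ := Finset.card_le_card hsubT
            _ ≤ 4 * nn j := count_le hI (nn j) (uu nn j) (vv nn j) (SS nn j)
                (mem_SS_iff nn j)
      _ ≤ aa Λ nn j * (4 * sig Λ nn j) := by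
          apply mul_le_mul_of_nonneg_left _ (le_of_lt (aa_pos Λ nn hpos hn1 j))
          have := sum_range_mul_le (w Λ) (w_anti Λ hpos hmono) (w_nonneg Λ hpos) 4 (nn j)
          rw [sig]
          calc ∑ k ∈ Finset.range (4 * nn j), w Λ k
              ≤ (4:ℕ) * ∑ k ∈ Finset.range (nn j), w Λ k := this
            _ = 4 * ∑ k ∈ Finset.range (nn j), w Λ k := by norm_num
      _ = 2 * (1/2 : ℝ) ^ j := by
          rw [aa]
          have hs := sig_pos Λ nn hpos hn1 j
          have h2 : (2:ℝ) ^ (j+1) = 2 * 2 ^ j := by ring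
          rw [one_div_pow]
          field_simp
          ring
  calc ∑ j ∈ D.image L, ∑ i ∈ D.filter (fun i => L i = j), g i
      ≤ ∑ j ∈ D.image L, 2 * (1/2 : ℝ) ^ j := Finset.sum_le_sum hinner
    _ ≤ ∑ j ∈ Finset.range ((D.image L).sup id + 1), 2 * (1/2 : ℝ) ^ j := by
        apply Finset.sum_le_sum_of_subset_of_nonneg
        · intro j hj
          rw [Finset.mem_range]
          have h5 : j ≤ (D.image L).sup id := Finset.le_sup (f := id) hj
          omega
        · intro j _ _; positivity
    _ = 2 * ∑ j ∈ Finset.range ((D.image L).sup id + 1), (1/2 : ℝ) ^ j := by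
        rw [Finset.mul_sum]
    _ ≤ 2 * 2 := by
        have := sum_geometric_two_le ((D.image L).sup id + 1)
        linarith
    _ = 4 := by norm_num

end withH


lemma pj_le_pi (j : ℕ) : pj j ≤ Real.pi := by
  rw [pj]
  have h1 : (1:ℝ) ≤ 2 ^ j := one_le_pow₀ (by norm_num)
  rw [div_le_iff₀ (by positivity)]
  nlinarith [Real.pi_pos]

lemma block_sub (j : ℕ) : Ioo (pj j) (2 * pj j) ⊆ Ioo 0 (2 * Real.pi) := by
  intro x hx
  simp only [mem_Ioo] at hx ⊢
  have := pj_pos j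
  have := pj_le_pi j
  constructor <;> nlinarith

lemma not_mem_SS_of_block {j l : ℕ} (h : l ≠ j) {x : ℝ}
    (hx : x ∈ Ioo (pj j) (2 * pj j)) : x ∉ SS nn l := by
  intro hc
  have h2 := SS_subset nn l hc
  simp only [mem_Ioo] at hx h2
  rcases Nat.lt_or_ge j l with hlt | hge
  · have := pj_block_le hlt
    linarith
  · have hlt : l < j := by omega
    have := pj_block_le hlt
    linarith

lemma mm_mem {j p : ℕ} (hp : p < nn j) : mm nn j p ∈ SS nn j := by
  rw [mem_SS_iff]
  refine ⟨p, hp, ?_, ?_⟩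
  · rw [uu, mm]; nlinarith [hh_pos nn j]
  · rw [mm, vv]; nlinarith [hh_pos nn j]

lemma MM_in_block {j p : ℕ} (hp : p < nn j) : MM nn j p ∈ Ioo (pj j) (2 * pj j) := by
  have hh := hh_pos nn j
  have hp' : (p : ℝ) ≤ (nn j : ℝ) - 1 := by
    have : (p : ℝ) + 1 ≤ (nn j : ℝ) := by exact_mod_cast hp
    linarith
  have hcalc : (2 * (nn j : ℝ) + 2) * St4.hh nn j = pj j := by
    rw [St4.hh]; field_simp
  constructor
  · rw [MM]; nlinarith [Nat.cast_nonneg (α := ℝ) p]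
  · rw [MM]; nlinarith

lemma MM_not_mem {j p : ℕ} (hp : p < nn j) (l : ℕ) : MM nn j p ∉ SS nn l := by
  rcases eq_or_ne l j with heq | hne
  · subst heq
    rw [mem_SS_iff]
    rintro ⟨p', hp', h1, h2⟩
    have hh := hh_pos nn l
    rw [uu, MM] at h1
    rw [vv, MM] at h2
    have hle : (p' : ℝ) < (p : ℝ) + 1 := by nlinarith
    have hlt : (p : ℝ) < (p' : ℝ) := by nlinarith
    have c1 : p' < p + 1 := by exact_mod_cast hle
    have c2 : p < p' := by exact_mod_cast hlt
    omega
  · exact not_mem_SS_of_block nn hne (MM_in_block nn hp)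

lemma mm_Icc {j p : ℕ} (hp : p < nn j) : mm nn j p ∈ Icc (0:ℝ) (2 * Real.pi) := by
  have := block_sub j (SS_subset nn j (mm_mem nn hp))
  exact ⟨le_of_lt this.1, le_of_lt this.2⟩

lemma MM_Icc {j p : ℕ} (hp : p < nn j) : MM nn j p ∈ Icc (0:ℝ) (2 * Real.pi) := by
  have := block_sub j (MM_in_block nn hp)
  exact ⟨le_of_lt this.1, le_of_lt this.2⟩

lemma mm_lt_MM (j p : ℕ) : mm nn j p < MM nn j p := by
  rw [mm, MM]; nlinarith [hh_pos nn j]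

lemma MM_le_mm {j p p' : ℕ} (h : p < p') : MM nn j p ≤ mm nn j p' := by
  rw [mm, MM]
  have : (p : ℝ) + 1 ≤ (p' : ℝ) := by exact_mod_cast h
  nlinarith [hh_pos nn j]

lemma ff_symm (x y : ℝ) : ff Λ nn x y = ff Λ nn y x := by
  rw [ff, ff, f0_symm]

section withH2
variable (hpos : ∀ n, 1 ≤ n → 0 < Λ n)

/-- the rectangle family at scale `j`. -/
def Arect (j : ℕ) : Fin ((nn j) ^ 2) → (ℝ × ℝ) × (ℝ × ℝ) := fun k =>
  ((mm nn j ((k : ℕ) / nn j), MM nn j ((k : ℕ) / nn j)),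
   (mm nn j ((k : ℕ) % nn j), MM nn j ((k : ℕ) % nn j)))

lemma Arect_nonoverlap (hn1 : ∀ j, 1 ≤ nn j) (j : ℕ) :
    NonoverlapRect ((nn j) ^ 2) (Arect nn j) := by
  have hnpos : 0 < nn j := hn1 j
  have hdiv : ∀ k : Fin ((nn j) ^ 2), (k : ℕ) / nn j < nn j := by
    intro k
    exact Nat.div_lt_of_lt_mul (by simpa [pow_two] using k.2)
  have hmod : ∀ k : Fin ((nn j) ^ 2), (k : ℕ) % nn j < nn j :=
    fun k => Nat.mod_lt _ hnpos
  constructor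
  · intro k
    refine ⟨(mm_Icc nn (hdiv k)).1, mm_lt_MM nn j _, (MM_Icc nn (hdiv k)).2,
      (mm_Icc nn (hmod k)).1, mm_lt_MM nn j _, (MM_Icc nn (hmod k)).2⟩
  · intro k l hkl
    have hne : (k : ℕ) / nn j ≠ (l : ℕ) / nn j ∨ (k : ℕ) % nn j ≠ (l : ℕ) % nn j := by
      by_contra hc
      push_neg at hc
      apply hkl
      have h1 := Nat.div_add_mod (k : ℕ) (nn j)
      have h2 := Nat.div_add_mod (l : ℕ) (nn j)
      have : (k : ℕ) = (l : ℕ) := by rw [← h1, ← h2, hc.1, hc.2]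
      exact Fin.ext this
    rw [Set.disjoint_left]
    rintro ⟨a, b⟩ h1 h2
    simp only [Arect, Set.mem_prod, mem_Ioo] at h1 h2
    rcases hne with hne | hne
    · rcases Nat.lt_or_ge ((k : ℕ) / nn j) ((l : ℕ) / nn j) with h | h
      · have := MM_le_mm nn (j := j) h
        linarith [h1.1.2, h2.1.1]
      · have h' : (l : ℕ) / nn j < (k : ℕ) / nn j := by omega
        have := MM_le_mm nn (j := j) h'
        linarith [h2.1.2, h1.1.1]
    · rcases Nat.lt_or_ge ((k : ℕ) % nn j) ((l : ℕ) % nn j) with h | h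
      · have := MM_le_mm nn (j := j) h
        linarith [h1.2.2, h2.2.1]
      · have h' : (l : ℕ) % nn j < (k : ℕ) % nn j := by omega
        have := MM_le_mm nn (j := j) h'
        linarith [h2.2.2, h1.2.1]

include hpos in
lemma Arect_sum (hn1 : ∀ j, 1 ≤ nn j) (j : ℕ) :
    ∑ k : Fin ((nn j) ^ 2),
      |ff Λ nn (Arect nn j k).1.1 (Arect nn j k).2.1 -
        ff Λ nn (Arect nn j k).1.1 (Arect nn j k).2.2 -
        ff Λ nn (Arect nn j k).1.2 (Arect nn j k).2.1 +
        ff Λ nn (Arect nn j k).1.2 (Arect nn j k).2.2| / Λ ((k : ℕ) + 1)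
      = aa Λ nn j * tau Λ nn j := by
  have hnpos : 0 < nn j := hn1 j
  have hdiv : ∀ k : Fin ((nn j) ^ 2), (k : ℕ) / nn j < nn j := by
    intro k
    exact Nat.div_lt_of_lt_mul (by simpa [pow_two] using k.2)
  have hmod : ∀ k : Fin ((nn j) ^ 2), (k : ℕ) % nn j < nn j :=
    fun k => Nat.mod_lt _ hnpos
  have hterm : ∀ k : Fin ((nn j) ^ 2),
      |ff Λ nn (Arect nn j k).1.1 (Arect nn j k).2.1 -
        ff Λ nn (Arect nn j k).1.1 (Arect nn j k).2.2 -
        ff Λ nn (Arect nn j k).1.2 (Arect nn j k).2.1 +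
        ff Λ nn (Arect nn j k).1.2 (Arect nn j k).2.2| / Λ ((k : ℕ) + 1)
      = aa Λ nn j * w Λ (k : ℕ) := by
    intro k
    set p := (k : ℕ) / nn j
    set q := (k : ℕ) % nn j
    have e1 : ff Λ nn (mm nn j p) (mm nn j q) = aa Λ nn j := by
      rw [ff_eq_f0 Λ nn (mm_Icc nn (hdiv k)) (mm_Icc nn (hmod k)),
        f0_eq_left Λ nn (mm_mem nn (hdiv k)), ind_of_mem nn (mm_mem nn (hmod k)), mul_one]
    have e2 : ff Λ nn (mm nn j p) (MM nn j q) = 0 := by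
      rw [ff_eq_f0 Λ nn (mm_Icc nn (hdiv k)) (MM_Icc nn (hmod k)),
        f0_eq_left Λ nn (mm_mem nn (hdiv k)),
        ind_of_not_mem nn (MM_not_mem nn (hmod k) j), mul_zero]
    have e3 : ff Λ nn (MM nn j p) (mm nn j q) = 0 := by
      rw [ff_eq_f0 Λ nn (MM_Icc nn (hdiv k)) (mm_Icc nn (hmod k)),
        f0_zero_left Λ nn (MM_not_mem nn (hdiv k))]
    have e4 : ff Λ nn (MM nn j p) (MM nn j q) = 0 := by
      rw [ff_eq_f0 Λ nn (MM_Icc nn (hdiv k)) (MM_Icc nn (hmod k)),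
        f0_zero_left Λ nn (MM_not_mem nn (hdiv k))]
    show |ff Λ nn (mm nn j p) (mm nn j q) - ff Λ nn (mm nn j p) (MM nn j q) -
        ff Λ nn (MM nn j p) (mm nn j q) + ff Λ nn (MM nn j p) (MM nn j q)| / Λ ((k : ℕ) + 1)
      = aa Λ nn j * w Λ (k : ℕ)
    rw [e1, e2, e3, e4]
    rw [abs_of_nonneg (by simpa using le_of_lt (aa_pos Λ nn hpos hn1 j))]
    rw [w, div_eq_mul_one_div]
    ring
  rw [Finset.sum_congr rfl (fun k _ => hterm k), ← Finset.mul_sum]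
  congr 1
  rw [tau, Finset.sum_range fun k => w Λ k]

end withH2

end St4
end St4sec

/-- if `limsup (Σ_{k≤n²} 1/λ_k)/(Σ_{k≤n} 1/λ_k) = +∞`,
then `Λ#BV \ Λ*BV ≠ ∅`. -/
theorem stmt4 (Λ : ℕ → ℝ)
    (hpos : ∀ n, 1 ≤ n → 0 < Λ n) (hmono : ∀ n, 1 ≤ n → Λ n ≤ Λ (n + 1))
    (htop : Tendsto Λ atTop atTop)
    (hlimsup : ∀ M : ℝ, ∃ᶠ n in atTop,
      M < (∑ k ∈ Finset.range (n ^ 2), 1 / Λ (k + 1)) /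
          (∑ k ∈ Finset.range n, 1 / Λ (k + 1))) :
    ∃ f : ℝ → ℝ → ℝ, Periodic2 f ∧
      LamSharpV1 Λ f + LamSharpV2 Λ f ≠ ⊤ ∧
      LamV1 Λ f + LamV2 Λ f + LamStarV Λ f = ⊤  := by
  classical
  have hex : ∀ j : ℕ, ∃ n : ℕ, ((4:ℝ) ^ (j + 1)) <
      (∑ k ∈ Finset.range (n ^ 2), 1 / Λ (k + 1)) /
        (∑ k ∈ Finset.range n, 1 / Λ (k + 1)) := fun j => (hlimsup _).exists
  set nn : ℕ → ℕ := fun j => (hex j).choose with hnn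
  have hspec : ∀ j, (4:ℝ) ^ (j + 1) <
      (∑ k ∈ Finset.range ((nn j) ^ 2), 1 / Λ (k + 1)) /
        (∑ k ∈ Finset.range (nn j), 1 / Λ (k + 1)) := fun j => (hex j).choose_spec
  have hn1 : ∀ j, 1 ≤ nn j := by
    intro j
    by_contra h
    push_neg at h
    have h0 : nn j = 0 := by omega
    have h1 := hspec j
    rw [h0] at h1
    norm_num at h1
    nlinarith [pow_pos (show (0:ℝ) < 4 by norm_num) (j + 1)]
  have hsigeq : ∀ j, St4.sig Λ nn j = ∑ k ∈ Finset.range (nn j), 1 / Λ (k + 1) := by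
    intro j
    rw [St4.sig]
    exact Finset.sum_congr rfl fun k _ => by rw [St4.w]
  have htaueq : ∀ j, St4.tau Λ nn j = ∑ k ∈ Finset.range ((nn j) ^ 2), 1 / Λ (k + 1) := by
    intro j
    rw [St4.tau]
    exact Finset.sum_congr rfl fun k _ => by rw [St4.w]
  have hsig : ∀ j, 0 < St4.sig Λ nn j := St4.sig_pos Λ nn hpos hn1
  have hratio : ∀ j, (4:ℝ) ^ (j + 1) * St4.sig Λ nn j < St4.tau Λ nn j := by
    intro j
    have h1 := hspec j
    have h2 := hsig j
    rw [← hsigeq, ← htaueq] at h1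
    rw [lt_div_iff₀ h2] at h1
    linarith
  refine ⟨St4.ff Λ nn, fun x y => St4.ff_periodic Λ nn x y, ?_, ?_⟩
  · -- sharp variations are finite
    have h1 : LamSharpV1 Λ (St4.ff Λ nn) ≤ ENNReal.ofReal 4 := by
      rw [LamSharpV1]
      refine iSup_le fun n => iSup_le fun I => iSup_le fun y => iSup_le fun hI =>
        iSup_le fun hy => ?_
      exact ENNReal.ofReal_le_ofReal (St4.sharp_sum_le Λ nn hpos hmono hn1 I y hI hy)
    have h2 : LamSharpV2 Λ (St4.ff Λ nn) ≤ ENNReal.ofReal 4 := by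
      rw [LamSharpV2]
      refine iSup_le fun m => iSup_le fun J => iSup_le fun x => iSup_le fun hJ =>
        iSup_le fun hx => ?_
      apply ENNReal.ofReal_le_ofReal
      have heq : ∀ j : Fin m,
          |St4.ff Λ nn (x j) (J j).2 - St4.ff Λ nn (x j) (J j).1| / Λ ((j : ℕ) + 1)
          = |St4.ff Λ nn (J j).2 (x j) - St4.ff Λ nn (J j).1 (x j)| / Λ ((j : ℕ) + 1) := by
        intro j
        rw [St4.ff_symm Λ nn (x j) (J j).2, St4.ff_symm Λ nn (x j) (J j).1]
      rw [Finset.sum_congr rfl fun j _ => heq j]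
      exact St4.sharp_sum_le Λ nn hpos hmono hn1 J x hJ hx
    have hsum : LamSharpV1 Λ (St4.ff Λ nn) + LamSharpV2 Λ (St4.ff Λ nn)
        ≤ ENNReal.ofReal 4 + ENNReal.ofReal 4 := add_le_add h1 h2
    intro hc
    rw [hc] at hsum
    have hfin : (ENNReal.ofReal (4:ℝ) + ENNReal.ofReal (4:ℝ)) ≠ ⊤ :=
      ENNReal.add_ne_top.2 ⟨ENNReal.ofReal_ne_top, ENNReal.ofReal_ne_top⟩
    exact hfin (top_le_iff.1 hsum)
  · -- Λ*V is infinite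
    have hle : ∀ j : ℕ, ENNReal.ofReal ((2:ℝ) ^ (j + 1)) ≤ LamStarV Λ (St4.ff Λ nn) := by
      intro j
      have hsum := St4.Arect_sum Λ nn hpos hn1 j
      have hval : (2:ℝ) ^ (j + 1) ≤ St4.aa Λ nn j * St4.tau Λ nn j := by
        have hr := hratio j
        have hs := hsig j
        have haa : St4.aa Λ nn j = 1 / (2 ^ (j + 1) * St4.sig Λ nn j) := rfl
        have h4 : (4:ℝ) ^ (j + 1) = 2 ^ (j + 1) * 2 ^ (j + 1) := by
          rw [show (4:ℝ) = 2 * 2 by norm_num, mul_pow]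
        have h2p : (0:ℝ) < 2 ^ (j + 1) := by positivity
        rw [haa, div_mul_eq_mul_div, le_div_iff₀ (by positivity)]
        nlinarith
      calc ENNReal.ofReal ((2:ℝ) ^ (j + 1))
          ≤ ENNReal.ofReal (St4.aa Λ nn j * St4.tau Λ nn j) := ENNReal.ofReal_le_ofReal hval
        _ = ENNReal.ofReal (∑ k : Fin ((nn j) ^ 2),
            |St4.ff Λ nn (St4.Arect nn j k).1.1 (St4.Arect nn j k).2.1 -
              St4.ff Λ nn (St4.Arect nn j k).1.1 (St4.Arect nn j k).2.2 -
              St4.ff Λ nn (St4.Arect nn j k).1.2 (St4.Arect nn j k).2.1 +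
              St4.ff Λ nn (St4.Arect nn j k).1.2 (St4.Arect nn j k).2.2| / Λ ((k : ℕ) + 1)) := by
            rw [hsum]
        _ ≤ LamStarV Λ (St4.ff Λ nn) := by
            rw [LamStarV]
            apply le_iSup_of_le ((nn j) ^ 2)
            apply le_iSup_of_le (St4.Arect nn j)
            exact le_iSup_of_le (St4.Arect_nonoverlap nn hn1 j) (le_refl _)
    have hstar : LamStarV Λ (St4.ff Λ nn) = ⊤ := by
      by_contra hne
      obtain ⟨m, hm⟩ := pow_unbounded_of_one_lt
        ((LamStarV Λ (St4.ff Λ nn)).toReal) (show (1:ℝ) < 2 by norm_num)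
      have h1 := (ENNReal.ofReal_le_iff_le_toReal hne).1 (hle m)
      have h2 : (2:ℝ) ^ m ≤ 2 ^ (m + 1) := by
        apply pow_le_pow_right₀ (by norm_num) (by omega)
      linarith
    rw [hstar]
    simp
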